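/- arXiv:1308.2520 — 2 statements merged into one kernel-verified Lean document; each statement's English description precedes it below -/
import Mathlib

section
/- Let {K_i : i ∈ I} be a family of convex cones in a Banach space X. Then {K_i} has the linear regularity property if and only if it has the normal property, and these hold if and only if {K_i} has the closed intersection property and there exists η > 0 such that {K_i°} has property (G_η). -/
open Set Metric
open scoped Pointwise

noncomputable section

/-- The recession cone `0⁺A = {x | A + t • x ⊆ A for all t ≥ 0}`. -/
def recCone {X : Type*} [AddCommGroup X] [Module ℝ X] (A : Set X) : Set X :=
  {x | ∀ t : ℝ, 0 ≤ t → ∀ a ∈ A, a + t • x ∈ A}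

/-- The inverse sum `B₁ # B₂`. -/
def invSum {X : Type*} [AddCommGroup X] [Module ℝ X] (B₁ B₂ : Set X) : Set X :=
  (⋃ t ∈ Set.Ioo (0:ℝ) 1, (t • B₁ ∩ (1 - t) • B₂)) ∪ (B₁ ∩ recCone B₂) ∪ (B₂ ∩ recCone B₁)

/-- The polar `A° = {x* | ⟨x*, x⟩ ≤ 1 ∀ x ∈ A}` of a set in `X`, a subset of the dual. -/
def pol {X : Type*} [NormedAddCommGroup X] [NormedSpace ℝ X] (A : Set X) :
    Set (X →L[ℝ] ℝ) := {f | ∀ x ∈ A, f x ≤ 1}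

/-- The dual cone (negative polar) `A^⊖ = {x* | ⟨x*, x⟩ ≤ 0 ∀ x ∈ A}`. -/
def dCone {X : Type*} [NormedAddCommGroup X] [NormedSpace ℝ X] (A : Set X) :
    Set (X →L[ℝ] ℝ) := {f | ∀ x ∈ A, f x ≤ 0}

/-- The weak* closure of a set of continuous linear functionals. -/
def wcl {X : Type*} [NormedAddCommGroup X] [NormedSpace ℝ X]
    (S : Set (X →L[ℝ] ℝ)) : Set (X →L[ℝ] ℝ) :=
  {f | StrongDual.toWeakDual (𝕜 := ℝ) (E := X) f ∈
    closure (StrongDual.toWeakDual (𝕜 := ℝ) (E := X) '' S)}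

/-- The set of all finite sums `Σ_{i ∈ I₀} x_i` with `x_i ∈ P i`, `I₀ ⊆ I` finite. -/
def finSums {X : Type*} [NormedAddCommGroup X] [NormedSpace ℝ X] {I : Type*}
    (P : I → Set (X →L[ℝ] ℝ)) : Set (X →L[ℝ] ℝ) :=
  {g | ∃ (s : Finset I) (x : I → (X →L[ℝ] ℝ)), (∀ i ∈ s, x i ∈ P i) ∧ g = ∑ i ∈ s, x i}

/-- The extended Jameson property `(G_η)`: every `f` in the weak* closure of the set of
finite sums of the `P i` is a weak* limit (i.e. lies in the weak* closure) of finite sums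
`Σ_{i ∈ s} x_i`, `x_i ∈ P i`, with `Σ_{i ∈ s} ‖x_i‖ ≤ (1/η) ‖f‖`. -/
def propG {X : Type*} [NormedAddCommGroup X] [NormedSpace ℝ X] {I : Type*}
    (P : I → Set (X →L[ℝ] ℝ)) (η : ℝ) : Prop :=
  ∀ f ∈ wcl (finSums P),
    f ∈ wcl {g | ∃ (s : Finset I) (x : I → (X →L[ℝ] ℝ)),
      (∀ i ∈ s, x i ∈ P i) ∧ g = ∑ i ∈ s, x i ∧ ∑ i ∈ s, ‖x i‖ ≤ (1 / η) * ‖f‖}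

/-- The normal cone `N(C, x) = {x* | ⟨x*, c − x⟩ ≤ 0 ∀ c ∈ C}`. -/
def ncone {X : Type*} [NormedAddCommGroup X] [NormedSpace ℝ X] (C : Set X) (x : X) :
    Set (X →L[ℝ] ℝ) := {f | ∀ c ∈ C, f (c - x) ≤ 0}

/-- The conical hull of a convex set `S`: `cone S = {t • s | t ≥ 0, s ∈ S}`. -/
def coneHull {X : Type*} [AddCommGroup X] [Module ℝ X] (S : Set X) : Set X :=
  {y | ∃ t : ℝ, 0 ≤ t ∧ ∃ s ∈ S, y = t • s}

end


section Helpers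

open Filter Topology

set_option linter.unusedSectionVars false

variable {X : Type*} [NormedAddCommGroup X] [NormedSpace ℝ X]

instance : LocallyConvexSpace ℝ (WeakDual ℝ X) := WeakBilin.locallyConvexSpace

lemma weakdual_dual_eval (φ : WeakDual ℝ X →L[ℝ] ℝ) : ∃ x : X, ∀ f : WeakDual ℝ X, φ f = f x := by
  have h1 : φ ⁻¹' (Set.Ioo (-1:ℝ) 1) ∈ 𝓝 (0 : WeakDual ℝ X) := by
    have hc := φ.continuous.continuousAt (x := (0 : WeakDual ℝ X))
    have : Set.Ioo (-1:ℝ) 1 ∈ 𝓝 (φ 0) := by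
      rw [map_zero]
      exact isOpen_Ioo.mem_nhds (by norm_num)
    exact hc.preimage_mem_nhds this
  have h2 : φ ⁻¹' (Set.Ioo (-1:ℝ) 1) ∈
      Filter.comap (fun (f : WeakDual ℝ X) (y : X) => f y) (𝓝 (fun _ => (0:ℝ))) := by
    have : (𝓝 (0 : WeakDual ℝ X)) =
        Filter.comap (fun (f : WeakDual ℝ X) (y : X) => f y) (𝓝 (fun y : X => ((0 : WeakDual ℝ X) y))) :=
      nhds_induced _ _
    rw [this] at h1; exact h1
  obtain ⟨S, hS, hSsub⟩ := Filter.mem_comap.mp h2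
  rw [nhds_pi, Filter.mem_pi] at hS
  obtain ⟨I, hIfin, t, ht, hIt⟩ := hS
  choose ε hε hball using fun y => Metric.mem_nhds_iff.mp (by simpa using ht y)
  have key : ∀ f : WeakDual ℝ X, (∀ y ∈ I, |f y| < ε y) → |φ f| < 1 := by
    intro f hf
    have : (fun y => f y) ∈ I.pi t := by
      intro y hy
      exact hball y (by simpa [Real.norm_eq_abs] using hf y hy)
    have := hSsub (hIt this)
    simp only [Set.mem_preimage, Set.mem_Ioo] at this
    rw [abs_lt]; exact this
  have hker : ∀ f : WeakDual ℝ X, (∀ y ∈ I, f y = 0) → φ f = 0 := by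
    intro f hf
    by_contra hne
    obtain ⟨c, hc⟩ : ∃ c : ℝ, 1 ≤ |c| * |φ f| := ⟨(|φ f|)⁻¹, by
      rw [abs_inv, abs_abs, inv_mul_cancel₀ (abs_ne_zero.mpr hne)]⟩
    have := key (c • f) (fun y hy => by
      have : (c • f) y = c * f y := rfl
      rw [this, hf y hy, mul_zero]; simpa using hε y)
    rw [map_smul, smul_eq_mul, abs_mul] at this
    linarith
  haveI : Finite I := hIfin.to_subtype
  haveI : Fintype I := Fintype.ofFinite I
  let L : I → WeakDual ℝ X →ₗ[ℝ] ℝ := fun i =>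
    { toFun := fun f => f i.val
      map_add' := fun f g => rfl
      map_smul' := fun c f => rfl }
  have hspan : φ.toLinearMap ∈ Submodule.span ℝ (Set.range L) := by
    apply mem_span_of_iInf_ker_le_ker (L := L)
    intro f hf
    simp only [Submodule.mem_iInf, LinearMap.mem_ker] at hf ⊢
    exact hker f (fun y hy => hf ⟨y, hy⟩)
  obtain ⟨c, hc⟩ := (Submodule.mem_span_range_iff_exists_fun ℝ).mp hspan
  refine ⟨∑ i : I, c i • i.val, fun f => ?_⟩
  have h3 := congrArg (fun (ψ : WeakDual ℝ X →ₗ[ℝ] ℝ) => ψ f) hc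
  simp only [LinearMap.coe_sum, Finset.sum_apply, LinearMap.smul_apply] at h3
  rw [show φ f = φ.toLinearMap f from rfl, ← h3]
  show ∑ i : I, c i • (f i.val) = ((f : X →L[ℝ] ℝ) : X → ℝ) (∑ i : I, c i • i.val)
  rw [map_sum]
  exact Finset.sum_congr rfl fun i _ => by rw [map_smul]

/-- pass an evaluation bound to the weak* closure -/
lemma eval_le_of_wcl {S : Set (X →L[ℝ] ℝ)} {x : X} {c : ℝ} (h : ∀ g ∈ S, g x ≤ c)
    {f : X →L[ℝ] ℝ} (hf : f ∈ wcl S) : f x ≤ c := by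
  have hcl : IsClosed {φ : WeakDual ℝ X | φ x ≤ c} :=
    IsClosed.preimage (WeakDual.eval_continuous x) isClosed_Iic
  have hsub : closure (StrongDual.toWeakDual (𝕜 := ℝ) (E := X) '' S)
      ⊆ {φ : WeakDual ℝ X | φ x ≤ c} := by
    apply closure_minimal _ hcl
    rintro _ ⟨g, hg, rfl⟩
    exact h g hg
  exact hsub hf

lemma mem_wcl_self {S : Set (X →L[ℝ] ℝ)} {f : X →L[ℝ] ℝ} (hf : f ∈ S) : f ∈ wcl S := by
  show StrongDual.toWeakDual (𝕜 := ℝ) (E := X) f ∈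
    closure (StrongDual.toWeakDual (𝕜 := ℝ) (E := X) '' S)
  exact subset_closure (Set.mem_image_of_mem _ hf)

/-- separation from a weak*-closed convex set, with the separating functional an evaluation -/
lemma sep_of_not_wcl {S : Set (X →L[ℝ] ℝ)} (hS : Convex ℝ S) {f : X →L[ℝ] ℝ}
    (hf : f ∉ wcl S) : ∃ (x : X) (u : ℝ), (∀ g ∈ S, g x < u) ∧ u < f x := by
  set e := StrongDual.toWeakDual (𝕜 := ℝ) (E := X) with he
  have himg : Convex ℝ (e '' S) := by
    have := hS.linear_image (e.toLinearMap)
    simpa using this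
  have hconv : Convex ℝ (closure (e '' S)) := himg.closure
  obtain ⟨φ, u, hu, huf⟩ := geometric_hahn_banach_closed_point hconv isClosed_closure hf
  obtain ⟨x, hx⟩ := weakdual_dual_eval φ
  refine ⟨x, u, fun g hg => ?_, ?_⟩
  · have := hu (e g) (subset_closure (Set.mem_image_of_mem _ hg))
    rwa [hx] at this
  · have := huf
    exact lt_of_lt_of_eq this (hx (e f))

/-- functionals in a dual cone are nonpositive on the closure -/
lemma dCone_closure {A : Set X} {f : X →L[ℝ] ℝ} (hf : f ∈ dCone A) : f ∈ dCone (closure A) := by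
  intro x hx
  have : closure A ⊆ {z : X | f z ≤ 0} :=
    closure_minimal hf (IsClosed.preimage f.continuous isClosed_Iic)
  exact this hx

/-- separation of a point at distance `> r` from a convex cone -/
lemma dual_of_infDist_gt {C : Set X} (hC : Convex ℝ C)
    (hsmul : ∀ t : ℝ, 0 ≤ t → t • C ⊆ C) (h0 : (0:X) ∈ C)
    {x : X} {r : ℝ} (hr : 0 ≤ r) (h : r < infDist x C) :
    ∃ f : X →L[ℝ] ℝ, f ∈ dCone C ∧ ‖f‖ ≤ 1 ∧ r < f x := by
  set s := closure (C + closedBall (0:X) r) with hs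
  have hCs : C ⊆ s := fun c hc =>
    subset_closure ⟨c, hc, 0, by simpa using hr, add_zero c⟩
  have hBs : ∀ y : X, ‖y‖ ≤ r → y ∈ s := fun y hy =>
    subset_closure ⟨0, h0, y, by simpa using hy, zero_add y⟩
  have hxs : x ∉ s := by
    rw [hs, Metric.mem_closure_iff]
    push_neg
    refine ⟨infDist x C - r, by linarith, ?_⟩
    rintro _ ⟨k, hk, b, hb, rfl⟩
    have h1 : infDist x C ≤ dist x k := infDist_le_dist_of_mem hk
    have h2 : dist x (k + b) ≥ dist x k - ‖b‖ := by
      have := dist_triangle x (k + b) k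
      have hbk : dist (k + b) k = ‖b‖ := by
        rw [dist_eq_norm]; simp
      linarith
    have hbr : ‖b‖ ≤ r := by simpa using hb
    linarith
  have hsc : Convex ℝ s := (hC.add (convex_closedBall _ _)).closure
  obtain ⟨f, u, hu, hux⟩ := geometric_hahn_banach_closed_point hsc isClosed_closure hxs
  have hu0 : (0:ℝ) < u := by simpa using hu 0 (hCs h0)
  have hfC : ∀ c ∈ C, f c ≤ 0 := by
    intro c hc
    by_contra hpos
    push_neg at hpos
    obtain ⟨t, ht0, htu⟩ : ∃ t : ℝ, 0 ≤ t ∧ u < t * f c :=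
      ⟨(u + 1) / f c, by positivity, by rw [div_mul_cancel₀ _ (ne_of_gt hpos)]; linarith⟩
    have : t • c ∈ C := hsmul t ht0 ⟨c, hc, rfl⟩
    have := hu (t • c) (hCs this)
    rw [map_smul, smul_eq_mul] at this
    linarith
  have hfB : r * ‖f‖ ≤ u := by
    rcases eq_or_lt_of_le hr with hr0 | hrpos
    · rw [← hr0, zero_mul]; exact hu0.le
    · rw [mul_comm, ← le_div_iff₀ hrpos]
      apply ContinuousLinearMap.opNorm_le_bound f (by positivity)
      intro z
      rcases eq_or_ne z 0 with rfl | hz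
      · simp
      · have hzpos : (0:ℝ) < ‖z‖ := norm_pos_iff.mpr hz
        set a := r / ‖z‖ with ha
        have hapos : (0:ℝ) < a := by positivity
        have hmem : ∀ w : X, ‖w‖ = ‖z‖ → a • w ∈ s := by
          intro w hw
          apply hBs
          rw [norm_smul, Real.norm_eq_abs, abs_of_pos hapos, hw, ha]
          rw [div_mul_cancel₀ _ (ne_of_gt hzpos)]
        have h1 : a * f z < u := by
          have := hu (a • z) (hmem z rfl)
          rwa [map_smul, smul_eq_mul] at this
        have h2 : a * (-(f z)) < u := by
          have := hu (a • (-z)) (hmem (-z) (by simp))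
          rwa [map_smul, smul_eq_mul, map_neg] at this
        have habs : a * |f z| < u := by
          rcases abs_cases (f z) with ⟨hc, _⟩ | ⟨hc, _⟩ <;> rw [hc] <;> linarith
        have hfz : |f z| < u / a := by
          rw [lt_div_iff₀ hapos, mul_comm]; exact habs
        have hua : u / a = u / r * ‖z‖ := by
          rw [ha]; field_simp
        rw [Real.norm_eq_abs]
        rw [hua] at hfz
        exact hfz.le
  have hfne0 : f ≠ 0 := by
    rintro rfl
    simp at hux
    linarith
  have hfpos : (0:ℝ) < ‖f‖ := norm_pos_iff.mpr hfne0
  have hfne : ‖f‖ ≠ 0 := ne_of_gt hfpos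
  refine ⟨‖f‖⁻¹ • f, ?_, ?_, ?_⟩
  · intro c hc
    have := hfC c hc
    rw [ContinuousLinearMap.smul_apply, smul_eq_mul]
    have : ‖f‖⁻¹ * f c ≤ ‖f‖⁻¹ * 0 := by
      apply mul_le_mul_of_nonneg_left this (by positivity)
    simpa using this
  · rw [norm_smul (‖f‖⁻¹) f]
    simp [abs_of_pos hfpos, inv_mul_cancel₀ hfne]
  · rw [ContinuousLinearMap.smul_apply, smul_eq_mul]
    rw [lt_inv_mul_iff₀ hfpos]
    calc ‖f‖ * r = r * ‖f‖ := mul_comm _ _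
      _ ≤ u := hfB
      _ < f x := hux

lemma infDist_le_of_dual {C : Set X} (hC : Convex ℝ C)
    (hsmul : ∀ t : ℝ, 0 ≤ t → t • C ⊆ C) (h0 : (0:X) ∈ C)
    {x : X} {r : ℝ} (hr : 0 ≤ r)
    (h : ∀ f : X →L[ℝ] ℝ, f ∈ dCone C → ‖f‖ ≤ 1 → f x ≤ r) : infDist x C ≤ r := by
  by_contra hlt
  push_neg at hlt
  obtain ⟨f, hfC, hf1, hfr⟩ := dual_of_infDist_gt hC hsmul h0 hr hlt
  exact absurd (h f hfC hf1) (not_le.mpr hfr)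

lemma dual_le_infDist {C : Set X} (h0 : (0:X) ∈ C) {f : X →L[ℝ] ℝ} (hf : f ∈ dCone C)
    (x : X) : f x ≤ ‖f‖ * infDist x C := by
  have key : ∀ k ∈ C, f x ≤ ‖f‖ * dist x k := by
    intro k hk
    have h1 : f x = f (x - k) + f k := by rw [← map_add, sub_add_cancel]
    have h2 : f (x - k) ≤ ‖f‖ * ‖x - k‖ := by
      calc f (x - k) ≤ |f (x - k)| := le_abs_self _
        _ = ‖f (x - k)‖ := (Real.norm_eq_abs _).symm
        _ ≤ ‖f‖ * ‖x - k‖ := f.le_opNorm _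
    rw [dist_eq_norm]
    have := hf k hk
    linarith
  rcases eq_or_lt_of_le (norm_nonneg f) with hf0 | hfpos
  · have : f x ≤ ‖f‖ * dist x 0 := key 0 h0
    rw [← hf0] at this ⊢
    simpa using this
  · rw [mul_comm, ← div_le_iff₀ hfpos]
    by_contra hlt
    push_neg at hlt
    obtain ⟨k, hk, hdk⟩ := (infDist_lt_iff ⟨0, h0⟩).mp hlt
    have h2 : ‖f‖ * dist x k < ‖f‖ * (f x / ‖f‖) := mul_lt_mul_of_pos_left hdk hfpos
    have h3 : ‖f‖ * (f x / ‖f‖) = f x := by field_simp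
    rw [h3] at h2
    linarith [key k hk]


lemma cone_convex {A : Set X} (hs : ∀ t:ℝ, 0 ≤ t → t • A ⊆ A) (ha : A + A ⊆ A) :
    Convex ℝ A := by
  intro y hy z hz a b ha' hb' _
  exact ha (Set.add_mem_add (hs a ha' ⟨y, hy, rfl⟩) (hs b hb' ⟨z, hz, rfl⟩))

lemma dCone_zero (A : Set X) : (0 : X →L[ℝ] ℝ) ∈ dCone A := fun x _ => by simp

lemma dCone_smul {A : Set X} {t : ℝ} (ht : 0 ≤ t) {f : X →L[ℝ] ℝ} (hf : f ∈ dCone A) :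
    t • f ∈ dCone A := by
  intro z hz
  have := hf z hz
  have h : (t • f) z = t * f z := rfl
  rw [h]
  exact mul_nonpos_of_nonneg_of_nonpos ht this

lemma dCone_add {A : Set X} {f g : X →L[ℝ] ℝ} (hf : f ∈ dCone A) (hg : g ∈ dCone A) :
    f + g ∈ dCone A := by
  intro z hz
  have h : (f + g) z = f z + g z := rfl
  rw [h]
  linarith [hf z hz, hg z hz]

section convexity

variable {I : Type*} {P : I → Set (X →L[ℝ] ℝ)}

lemma combo_spec [DecidableEq I]
    (hP0 : ∀ i, (0 : X →L[ℝ] ℝ) ∈ P i)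
    (hPs : ∀ i, ∀ t : ℝ, 0 ≤ t → ∀ p ∈ P i, t • p ∈ P i)
    (hPa : ∀ i, ∀ p ∈ P i, ∀ q ∈ P i, p + q ∈ P i)
    {s₁ s₂ : Finset I} {x y : I → X →L[ℝ] ℝ}
    (hx : ∀ i ∈ s₁, x i ∈ P i) (hy : ∀ i ∈ s₂, y i ∈ P i)
    {a b : ℝ} (ha : 0 ≤ a) (hb : 0 ≤ b) :
    (∀ i ∈ s₁ ∪ s₂,
      (a • (if i ∈ s₁ then x i else 0) + b • (if i ∈ s₂ then y i else 0)) ∈ P i)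
    ∧ (∑ i ∈ s₁ ∪ s₂, (a • (if i ∈ s₁ then x i else 0) + b • (if i ∈ s₂ then y i else 0))
        = a • ∑ i ∈ s₁, x i + b • ∑ i ∈ s₂, y i)
    ∧ (∑ i ∈ s₁ ∪ s₂, ‖a • (if i ∈ s₁ then x i else 0) + b • (if i ∈ s₂ then y i else 0)‖
        ≤ a * ∑ i ∈ s₁, ‖x i‖ + b * ∑ i ∈ s₂, ‖y i‖) := by
  have hsum1 : ∀ (f : I → X →L[ℝ] ℝ), ∑ i ∈ s₁ ∪ s₂, (if i ∈ s₁ then f i else 0)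
      = ∑ i ∈ s₁, f i := by
    intro f
    rw [Finset.sum_ite_mem, Finset.union_inter_cancel_left]
  have hsum2 : ∀ (f : I → X →L[ℝ] ℝ), ∑ i ∈ s₁ ∪ s₂, (if i ∈ s₂ then f i else 0)
      = ∑ i ∈ s₂, f i := by
    intro f
    rw [Finset.sum_ite_mem, Finset.union_inter_cancel_right]
  refine ⟨?_, ?_, ?_⟩
  · intro i _
    have h1 : a • (if i ∈ s₁ then x i else 0) ∈ P i := by
      split_ifs with h
      · exact hPs i a ha _ (hx i h)
      · simpa using hPs i a ha _ (hP0 i)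
    have h2 : b • (if i ∈ s₂ then y i else 0) ∈ P i := by
      split_ifs with h
      · exact hPs i b hb _ (hy i h)
      · simpa using hPs i b hb _ (hP0 i)
    exact hPa i _ h1 _ h2
  · rw [Finset.sum_add_distrib, ← Finset.smul_sum, ← Finset.smul_sum, hsum1, hsum2]
  · have key : ∀ i ∈ s₁ ∪ s₂,
        ‖a • (if i ∈ s₁ then x i else 0) + b • (if i ∈ s₂ then y i else 0)‖
        ≤ a * ‖(if i ∈ s₁ then x i else 0)‖ + b * ‖(if i ∈ s₂ then y i else 0)‖ := by
      intro i _
      calc ‖a • (if i ∈ s₁ then x i else 0) + b • (if i ∈ s₂ then y i else 0)‖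
          ≤ ‖a • (if i ∈ s₁ then x i else 0)‖ + ‖b • (if i ∈ s₂ then y i else 0)‖ :=
            norm_add_le _ _
        _ = a * ‖(if i ∈ s₁ then x i else 0)‖ + b * ‖(if i ∈ s₂ then y i else 0)‖ := by
            have e1 := norm_smul a (if i ∈ s₁ then x i else 0)
            have e2 := norm_smul b (if i ∈ s₂ then y i else 0)
            rw [e1, e2, Real.norm_eq_abs, Real.norm_eq_abs,
              abs_of_nonneg ha, abs_of_nonneg hb]
    calc ∑ i ∈ s₁ ∪ s₂, ‖a • (if i ∈ s₁ then x i else 0) + b • (if i ∈ s₂ then y i else 0)‖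
        ≤ ∑ i ∈ s₁ ∪ s₂, (a * ‖(if i ∈ s₁ then x i else 0)‖
            + b * ‖(if i ∈ s₂ then y i else 0)‖) := Finset.sum_le_sum key
      _ = a * ∑ i ∈ s₁, ‖x i‖ + b * ∑ i ∈ s₂, ‖y i‖ := by
          rw [Finset.sum_add_distrib, ← Finset.mul_sum, ← Finset.mul_sum]
          congr 2
          · calc ∑ i ∈ s₁ ∪ s₂, ‖(if i ∈ s₁ then x i else 0)‖
                = ∑ i ∈ s₁ ∪ s₂, (if i ∈ s₁ then ‖x i‖ else 0) := by
                  apply Finset.sum_congr rfl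
                  intro i _
                  split_ifs <;> simp
              _ = ∑ i ∈ s₁, ‖x i‖ := by rw [Finset.sum_ite_mem, Finset.union_inter_cancel_left]
          · calc ∑ i ∈ s₁ ∪ s₂, ‖(if i ∈ s₂ then y i else 0)‖
                = ∑ i ∈ s₁ ∪ s₂, (if i ∈ s₂ then ‖y i‖ else 0) := by
                  apply Finset.sum_congr rfl
                  intro i _
                  split_ifs <;> simp
              _ = ∑ i ∈ s₂, ‖y i‖ := by rw [Finset.sum_ite_mem, Finset.union_inter_cancel_right]

lemma finSums_convex (hP0 : ∀ i, (0 : X →L[ℝ] ℝ) ∈ P i)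
    (hPs : ∀ i, ∀ t : ℝ, 0 ≤ t → ∀ p ∈ P i, t • p ∈ P i)
    (hPa : ∀ i, ∀ p ∈ P i, ∀ q ∈ P i, p + q ∈ P i) : Convex ℝ (finSums P) := by
  classical
  rintro g₁ ⟨s₁, x, hx, rfl⟩ g₂ ⟨s₂, y, hy, rfl⟩ a b ha hb _
  obtain ⟨hmem, hsum, _⟩ := combo_spec hP0 hPs hPa hx hy ha hb
  exact ⟨s₁ ∪ s₂, _, hmem, hsum.symm⟩

lemma budget_convex (hP0 : ∀ i, (0 : X →L[ℝ] ℝ) ∈ P i)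
    (hPs : ∀ i, ∀ t : ℝ, 0 ≤ t → ∀ p ∈ P i, t • p ∈ P i)
    (hPa : ∀ i, ∀ p ∈ P i, ∀ q ∈ P i, p + q ∈ P i) (β : ℝ) :
    Convex ℝ {g : X →L[ℝ] ℝ | ∃ (s : Finset I) (x : I → (X →L[ℝ] ℝ)),
      (∀ i ∈ s, x i ∈ P i) ∧ g = ∑ i ∈ s, x i ∧ ∑ i ∈ s, ‖x i‖ ≤ β} := by
  classical
  rintro g₁ ⟨s₁, x, hx, rfl, hbx⟩ g₂ ⟨s₂, y, hy, rfl, hby⟩ a b ha hb hab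
  obtain ⟨hmem, hsum, hbud⟩ := combo_spec hP0 hPs hPa hx hy ha hb
  refine ⟨s₁ ∪ s₂, _, hmem, hsum.symm, ?_⟩
  calc ∑ i ∈ s₁ ∪ s₂, ‖a • (if i ∈ s₁ then x i else 0) + b • (if i ∈ s₂ then y i else 0)‖
      ≤ a * ∑ i ∈ s₁, ‖x i‖ + b * ∑ i ∈ s₂, ‖y i‖ := hbud
    _ ≤ a * β + b * β := by
        apply add_le_add
        · exact mul_le_mul_of_nonneg_left hbx ha
        · exact mul_le_mul_of_nonneg_left hby hb
    _ = β := by rw [← add_mul, hab, one_mul]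

end convexity

/-- bipolar-type result: a functional nonpositive on `⋂ closure (K i)` is in the weak*
closure of finite sums of the dual cones -/
lemma mem_wcl_finSums {I : Type*} {K : I → Set X}
    (hKs : ∀ i, ∀ t : ℝ, 0 ≤ t → t • K i ⊆ K i)
    (hKc : ∀ i, Convex ℝ (K i)) (h0 : ∀ i, (0:X) ∈ K i)
    {f : X →L[ℝ] ℝ} (hf : ∀ x : X, (∀ i, x ∈ closure (K i)) → f x ≤ 0) :
    f ∈ wcl (finSums (fun i => dCone (K i))) := by
  by_contra hnot
  have hconv : Convex ℝ (finSums (fun i => dCone (K i))) :=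
    finSums_convex (fun i => dCone_zero _) (fun i t ht p hp => dCone_smul ht hp)
      (fun i p hp q hq => dCone_add hp hq)
  obtain ⟨x, u, hu, huf⟩ := sep_of_not_wcl hconv hnot
  have h0mem : (0 : X →L[ℝ] ℝ) ∈ finSums (fun i => dCone (K i)) :=
    ⟨∅, fun _ => 0, by simp, by simp⟩
  have hu0 : (0:ℝ) < u := by simpa using hu 0 h0mem
  have hxi : ∀ i, ∀ p ∈ dCone (K i), p x ≤ 0 := by
    intro i p hp
    by_contra hpos
    push_neg at hpos
    set t := (u + 1) / p x with ht
    have htpos : 0 < t := by positivity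
    have hmem : t • p ∈ finSums (fun i => dCone (K i)) := by
      refine ⟨{i}, fun _ => t • p, ?_, by simp⟩
      intro j hj
      simp only [Finset.mem_singleton] at hj
      subst hj
      exact dCone_smul htpos.le hp
    have := hu _ hmem
    have heval : (t • p) x = t * p x := rfl
    rw [heval, ht, div_mul_cancel₀ _ (ne_of_gt hpos)] at this
    linarith
  have hxK : ∀ i, x ∈ closure (K i) := by
    intro i
    by_contra hxc
    have hne : (K i).Nonempty := ⟨0, h0 i⟩
    have hpos : 0 < infDist x (K i) := by
      rcases lt_or_eq_of_le (infDist_nonneg (s := K i) (x := x)) with h | h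
      · exact h
      · exact absurd ((mem_closure_iff_infDist_zero hne).mpr h.symm) hxc
    obtain ⟨p, hpC, _, hpx⟩ := dual_of_infDist_gt (hKc i) (hKs i) (h0 i) le_rfl hpos
    exact absurd (hxi i p hpC) (not_le.mpr hpx)
  have := hf x hxK
  linarith


section main

variable {I : Type*} [Nonempty I] (K : I → Set X)

lemma ball_smul_eq {η : ℝ} (hη : 0 < η) :
    η • closedBall (0:X) 1 = closedBall (0:X) η := by
  rw [_root_.smul_closedBall _ _ zero_le_one]
  simp [abs_of_pos hη]

lemma normal_to_reg
    (hcs : ∀ i, ∀ t : ℝ, 0 ≤ t → t • K i ⊆ K i) (h0 : ∀ i, (0:X) ∈ K i)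
    {η : ℝ} (hη : 0 < η)
    (hN : (⋂ i, (K i + η • closedBall (0:X) 1)) ⊆ (⋂ i, K i) + closedBall (0:X) 1)
    (x : X) (c : ℝ) (hc : ∀ i, infDist x (K i) ≤ c) :
    infDist x (⋂ i, K i) ≤ (1/η) * c := by
  have hc0 : 0 ≤ c := le_trans infDist_nonneg (hc (Classical.arbitrary I))
  apply le_of_forall_pos_le_add
  intro ε' hε'
  set ε := η * ε' with hεdef
  have hεpos : 0 < ε := by positivity
  set t := (c + ε)/η with ht
  have htpos : 0 < t := by positivity
  have hy : t⁻¹ • x ∈ ⋂ i, (K i + η • closedBall (0:X) 1) := by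
    simp only [ball_smul_eq hη]
    apply Set.mem_iInter.mpr
    intro i
    obtain ⟨k, hk, hdk⟩ := (infDist_lt_iff ⟨0, h0 i⟩).mp
      (lt_of_le_of_lt (hc i) (by linarith : c < c + ε))
    apply Set.mem_add.mpr
    refine ⟨t⁻¹ • k, hcs i t⁻¹ (by positivity) ⟨k, hk, rfl⟩, t⁻¹ • (x - k), ?_, ?_⟩
    · rw [mem_closedBall_zero_iff]
      have e := norm_smul (t⁻¹) (x - k)
      rw [e, Real.norm_eq_abs, abs_of_pos (by positivity)]
      have hxk : ‖x - k‖ ≤ c + ε := by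
        rw [← dist_eq_norm]; exact hdk.le
      calc t⁻¹ * ‖x - k‖ ≤ t⁻¹ * (c + ε) :=
            mul_le_mul_of_nonneg_left hxk (by positivity)
        _ = η := by rw [ht]; field_simp
    · rw [smul_sub]; abel
  obtain ⟨k', hk', b', hb', hsum⟩ := Set.mem_add.mp (hN hy)
  have hx : x = t • k' + t • b' := by
    have h1 : t • (t⁻¹ • x) = x := smul_inv_smul₀ (ne_of_gt htpos) x
    rw [← h1, ← hsum, smul_add]
  have hk'' : t • k' ∈ ⋂ i, K i :=
    Set.mem_iInter.mpr fun i => hcs i t htpos.le ⟨k', Set.mem_iInter.mp hk' i, rfl⟩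
  have hled : infDist x (⋂ i, K i) ≤ dist x (t • k') := infDist_le_dist_of_mem hk''
  have hd : dist x (t • k') = ‖t • b'‖ := by
    rw [hx, dist_eq_norm]
    congr 1
    abel
  have hb'1 : ‖b'‖ ≤ 1 := mem_closedBall_zero_iff.mp hb'
  have hnb : ‖t • b'‖ ≤ t := by
    have e := norm_smul t b'
    rw [e, Real.norm_eq_abs, abs_of_pos htpos]
    calc t * ‖b'‖ ≤ t * 1 := mul_le_mul_of_nonneg_left hb'1 htpos.le
      _ = t := mul_one t
  calc infDist x (⋂ i, K i) ≤ ‖t • b'‖ := by rw [← hd]; exact hled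
    _ ≤ t := hnb
    _ = 1/η * c + ε' := by rw [ht, hεdef]; field_simp

lemma reg_to_normal (h0 : ∀ i, (0:X) ∈ K i)
    {γ : ℝ} (hγ : 0 < γ)
    (hreg : ∀ x : X, ∀ c : ℝ, (∀ i, infDist x (K i) ≤ c) → infDist x (⋂ i, K i) ≤ γ * c) :
    ∃ η > (0:ℝ), (⋂ i, (K i + η • closedBall (0:X) 1)) ⊆ (⋂ i, K i) + closedBall (0:X) 1 := by
  refine ⟨1/(2*γ), by positivity, ?_⟩
  intro x hx
  have h1 : ∀ i, infDist x (K i) ≤ 1/(2*γ) := by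
    intro i
    have hmem := Set.mem_iInter.mp hx i
    rw [ball_smul_eq (by positivity)] at hmem
    obtain ⟨k, hk, b, hb, hkb⟩ := Set.mem_add.mp hmem
    calc infDist x (K i) ≤ dist x k := infDist_le_dist_of_mem hk
      _ = ‖b‖ := by rw [← hkb, dist_eq_norm]; congr 1; abel
      _ ≤ 1/(2*γ) := mem_closedBall_zero_iff.mp hb
  have h2 := hreg x _ h1
  have h3 : infDist x (⋂ i, K i) < 1 := by
    apply lt_of_le_of_lt h2
    rw [mul_one_div]
    rw [div_lt_one (by positivity)]
    linarith
  obtain ⟨k, hk, hdk⟩ := (infDist_lt_iff ⟨0, Set.mem_iInter.mpr h0⟩).mp h3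
  apply Set.mem_add.mpr
  refine ⟨k, hk, x - k, mem_closedBall_zero_iff.mpr ?_, by abel⟩
  rw [← dist_eq_norm]
  exact hdk.le

lemma normal_to_CI
    (hcs : ∀ i, ∀ t : ℝ, 0 ≤ t → t • K i ⊆ K i) (h0 : ∀ i, (0:X) ∈ K i)
    {η : ℝ} (hη : 0 < η)
    (hN : (⋂ i, (K i + η • closedBall (0:X) 1)) ⊆ (⋂ i, K i) + closedBall (0:X) 1) :
    closure (⋂ i, K i) = ⋂ i, closure (K i) := by
  apply subset_antisymm
  · apply Set.subset_iInter
    intro i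
    exact closure_mono (Set.iInter_subset _ i)
  · intro x hx
    have hc : ∀ i, infDist x (K i) ≤ 0 := by
      intro i
      rw [← infDist_closure]
      rw [infDist_zero_of_mem (Set.mem_iInter.mp hx i)]
    have hr := normal_to_reg K hcs h0 hη hN x 0 hc
    rw [mul_zero] at hr
    exact (mem_closure_iff_infDist_zero ⟨0, Set.mem_iInter.mpr h0⟩).mpr
      (le_antisymm hr infDist_nonneg)

lemma normal_to_G
    (hcs : ∀ i, ∀ t : ℝ, 0 ≤ t → t • K i ⊆ K i)
    (hca : ∀ i, K i + K i ⊆ K i) (h0 : ∀ i, (0:X) ∈ K i)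
    {η : ℝ} (hη : 0 < η)
    (hN : (⋂ i, (K i + η • closedBall (0:X) 1)) ⊆ (⋂ i, K i) + closedBall (0:X) 1) :
    propG (fun i => dCone (K i)) η := by
  intro f hf
  by_cases hf0 : f = 0
  · subst hf0
    apply mem_wcl_self
    exact ⟨∅, fun _ => 0, by simp, by simp, by simp⟩
  · have hfpos : (0:ℝ) < ‖f‖ := norm_pos_iff.mpr hf0
    set β := (1/η) * ‖f‖ with hβdef
    have hβ : 0 < β := by positivity
    by_contra hnot
    have hconv : Convex ℝ {g : X →L[ℝ] ℝ | ∃ (s : Finset I) (x : I → (X →L[ℝ] ℝ)),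
        (∀ i ∈ s, x i ∈ dCone (K i)) ∧ g = ∑ i ∈ s, x i ∧ ∑ i ∈ s, ‖x i‖ ≤ β} :=
      budget_convex (fun i => dCone_zero _) (fun i t ht p hp => dCone_smul ht hp)
        (fun i p hp q hq => dCone_add hp hq) β
    obtain ⟨x, u, hu, huf⟩ := sep_of_not_wcl hconv hnot
    have hu0 : (0:ℝ) < u := by
      have h0mem : (0 : X →L[ℝ] ℝ) ∈ {g : X →L[ℝ] ℝ | ∃ (s : Finset I)
          (x : I → (X →L[ℝ] ℝ)), (∀ i ∈ s, x i ∈ dCone (K i)) ∧ g = ∑ i ∈ s, x i ∧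
          ∑ i ∈ s, ‖x i‖ ≤ β} := ⟨∅, fun _ => 0, by simp, by simp, by simp [hβ.le]⟩
      simpa using hu 0 h0mem
    have hKd : ∀ i, infDist x (K i) ≤ u/β := by
      intro i
      apply infDist_le_of_dual (cone_convex (hcs i) (hca i)) (hcs i) (h0 i) (by positivity)
      intro p hp hp1
      have hnorm : ‖β • p‖ ≤ β := by
        have e := norm_smul β p
        rw [e, Real.norm_eq_abs, abs_of_pos hβ]
        calc β * ‖p‖ ≤ β * 1 := mul_le_mul_of_nonneg_left hp1 hβ.le
          _ = β := mul_one β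
      have hmem : β • p ∈ {g : X →L[ℝ] ℝ | ∃ (s : Finset I) (x : I → (X →L[ℝ] ℝ)),
          (∀ i ∈ s, x i ∈ dCone (K i)) ∧ g = ∑ i ∈ s, x i ∧ ∑ i ∈ s, ‖x i‖ ≤ β} := by
        refine ⟨{i}, fun _ => β • p, ?_, by simp, by simpa using hnorm⟩
        intro j hj
        simp only [Finset.mem_singleton] at hj
        subst hj
        exact dCone_smul hβ.le hp
      have := hu _ hmem
      have heval : (β • p) x = β * p x := rfl
      rw [heval] at this
      rw [le_div_iff₀ hβ, mul_comm]
      exact this.le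
    have hreg := normal_to_reg K hcs h0 hη hN x (u/β) hKd
    have hfd : f ∈ dCone (⋂ i, K i) := by
      intro y hy
      apply eval_le_of_wcl (S := finSums (fun i => dCone (K i))) _ hf
      rintro g ⟨s, p, hps, rfl⟩
      have heval : (∑ i ∈ s, p i) y = ∑ i ∈ s, p i y := by
        rw [ContinuousLinearMap.coe_sum', Finset.sum_apply]
      rw [heval]
      apply Finset.sum_nonpos
      intro i hi
      exact hps i hi y (Set.mem_iInter.mp hy i)
    have hle := dual_le_infDist (Set.mem_iInter.mpr h0) hfd x
    have hcomp : ‖f‖ * ((1/η) * (u/β)) = u := by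
      rw [hβdef]; field_simp
    have : f x ≤ u := by
      calc f x ≤ ‖f‖ * infDist x (⋂ i, K i) := hle
        _ ≤ ‖f‖ * ((1/η) * (u/β)) := mul_le_mul_of_nonneg_left hreg (norm_nonneg f)
        _ = u := hcomp
    linarith

lemma CIG_to_normal
    (hcs : ∀ i, ∀ t : ℝ, 0 ≤ t → t • K i ⊆ K i)
    (hca : ∀ i, K i + K i ⊆ K i) (h0 : ∀ i, (0:X) ∈ K i)
    (hCI : closure (⋂ i, K i) = ⋂ i, closure (K i))
    {η : ℝ} (hη : 0 < η) (hG : propG (fun i => dCone (K i)) η) :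
    ∃ η' > (0:ℝ), (⋂ i, (K i + η' • closedBall (0:X) 1)) ⊆ (⋂ i, K i) + closedBall (0:X) 1 := by
  refine ⟨η/2, by positivity, ?_⟩
  intro x hx
  have hC : Convex ℝ (⋂ i, K i) := convex_iInter fun i => cone_convex (hcs i) (hca i)
  have hCs : ∀ t:ℝ, 0 ≤ t → t • (⋂ i, K i) ⊆ ⋂ i, K i := by
    rintro t ht _ ⟨y, hy, rfl⟩
    exact Set.mem_iInter.mpr fun i => hcs i t ht ⟨y, Set.mem_iInter.mp hy i, rfl⟩
  have hxi : ∀ i, ∃ k ∈ K i, ‖x - k‖ ≤ η/2 := by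
    intro i
    have hmem := Set.mem_iInter.mp hx i
    rw [ball_smul_eq (by positivity)] at hmem
    obtain ⟨k, hk, b, hb, hkb⟩ := Set.mem_add.mp hmem
    refine ⟨k, hk, ?_⟩
    have : x - k = b := by rw [← hkb]; abel
    rw [this]
    exact mem_closedBall_zero_iff.mp hb
  have hdist : infDist x (⋂ i, K i) ≤ 1/2 := by
    apply infDist_le_of_dual hC hCs (Set.mem_iInter.mpr h0) (by norm_num)
    intro f hfC hf1
    have hf' : ∀ y : X, (∀ i, y ∈ closure (K i)) → f y ≤ 0 := by
      intro y hy
      have hy' : y ∈ closure (⋂ i, K i) := by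
        rw [hCI]; exact Set.mem_iInter.mpr hy
      exact dCone_closure hfC y hy'
    have hfw := mem_wcl_finSums hcs (fun i => cone_convex (hcs i) (hca i)) h0 hf'
    have hfG := hG f hfw
    apply eval_le_of_wcl _ hfG
    rintro g ⟨s, p, hps, rfl, hbudget⟩
    have heval : (∑ i ∈ s, p i) x = ∑ i ∈ s, p i x := by
      rw [ContinuousLinearMap.coe_sum', Finset.sum_apply]
    rw [heval]
    calc ∑ i ∈ s, p i x ≤ ∑ i ∈ s, ‖p i‖ * (η/2) := by
          apply Finset.sum_le_sum
          intro i hi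
          obtain ⟨k, hk, hxk⟩ := hxi i
          have h1 : p i x = p i k + p i (x - k) := by
            rw [← map_add]
            congr 1
            abel
          have h2 : p i (x - k) ≤ ‖p i‖ * ‖x - k‖ := by
            calc p i (x - k) ≤ |p i (x - k)| := le_abs_self _
              _ = ‖p i (x - k)‖ := (Real.norm_eq_abs _).symm
              _ ≤ ‖p i‖ * ‖x - k‖ := (p i).le_opNorm _
          have h3 : ‖p i‖ * ‖x - k‖ ≤ ‖p i‖ * (η/2) :=
            mul_le_mul_of_nonneg_left hxk (norm_nonneg _)
          have h4 := hps i hi k hk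
          linarith
      _ = (∑ i ∈ s, ‖p i‖) * (η/2) := (Finset.sum_mul _ _ _).symm
      _ ≤ ((1/η) * ‖f‖) * (η/2) := by
          apply mul_le_mul_of_nonneg_right hbudget (by positivity)
      _ ≤ 1/2 := by
          have : (1/η) * ‖f‖ * (η/2) = ‖f‖ / 2 := by field_simp
          rw [this]
          linarith
  obtain ⟨k, hk, hdk⟩ := (infDist_lt_iff ⟨0, Set.mem_iInter.mpr h0⟩).mp
    (lt_of_le_of_lt hdist one_half_lt_one)
  apply Set.mem_add.mpr
  refine ⟨k, hk, x - k, mem_closedBall_zero_iff.mpr ?_, by abel⟩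
  rw [← dist_eq_norm]
  exact hdk.le

end main

end Helpers

theorem stmt18 {X : Type*} [NormedAddCommGroup X] [NormedSpace ℝ X] [CompleteSpace X]
    {I : Type*} [Nonempty I] (K : I → Set X)
    (hcone_smul : ∀ i, ∀ t : ℝ, 0 ≤ t → t • K i ⊆ K i)
    (hcone_add : ∀ i, K i + K i ⊆ K i) (h0 : ∀ i, (0 : X) ∈ K i) :
    ((∃ γ > (0:ℝ), ∀ x : X, ∀ c : ℝ,
        (∀ i, infDist x (K i) ≤ c) → infDist x (⋂ i, K i) ≤ γ * c) ↔
      (∃ η > (0:ℝ),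
        (⋂ i, (K i + η • closedBall (0:X) 1)) ⊆ (⋂ i, K i) + closedBall (0:X) 1)) ∧
    ((∃ η > (0:ℝ),
        (⋂ i, (K i + η • closedBall (0:X) 1)) ⊆ (⋂ i, K i) + closedBall (0:X) 1) ↔
      (closure (⋂ i, K i) = (⋂ i, closure (K i)) ∧
        ∃ η > (0:ℝ), propG (fun i => dCone (K i)) η)) := by
  constructor
  · constructor
    · rintro ⟨γ, hγ, hreg⟩
      exact reg_to_normal K h0 hγ hreg
    · rintro ⟨η, hη, hN⟩
      exact ⟨1/η, by positivity, normal_to_reg K hcone_smul h0 hη hN⟩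
  · constructor
    · rintro ⟨η, hη, hN⟩
      exact ⟨normal_to_CI K hcone_smul h0 hη hN, η, hη,
        normal_to_G K hcone_smul hcone_add h0 hη hN⟩
    · rintro ⟨hCI, η, hη, hG⟩
      exact CIG_to_normal K hcone_smul hcone_add h0 hCI hη hG
end

section
/- Let γ > 0 and let {A_i : i ∈ I} be a family of closed convex subsets of a Banach space X with A := ⋂_i A_i ≠ ∅. Then the condition 'for all x ∈ A, N(A, x) ∩ B_{X*} ⊆ cl^{w*}co(⋃_i (N(A_i, x) ∩ γ·B_{X*}))' holds if and only if {A_i} has the CHIP (N(A, x) equals the weak* closure of Σ_i N(A_i, x) for all x ∈ A) and for every x ∈ A the family {N(A_i, x) : i ∈ I} has property (G_{1/γ}). -/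
set_option linter.unusedSectionVars false


open Set Metric
open scoped Pointwise

/-! ### Auxiliary lemmas -/

section Aux

variable {X : Type*} [NormedAddCommGroup X] [NormedSpace ℝ X]

private lemma norm_smul' (r : ℝ) (hr : 0 ≤ r) (g : X →L[ℝ] ℝ) : ‖r • g‖ = r * ‖g‖ := by
  rw [norm_smul r g, Real.norm_eq_abs, abs_of_nonneg hr]

private lemma zero_mem_ncone (C : Set X) (x : X) : (0 : X →L[ℝ] ℝ) ∈ ncone C x := by
  intro c hc; simp

private lemma ncone_add {C : Set X} {x : X} {f g : X →L[ℝ] ℝ} (hf : f ∈ ncone C x)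
    (hg : g ∈ ncone C x) : f + g ∈ ncone C x := by
  intro c hc; simpa using add_nonpos (hf c hc) (hg c hc)

private lemma ncone_smul {C : Set X} {x : X} {t : ℝ} (ht : 0 ≤ t) {f : X →L[ℝ] ℝ}
    (hf : f ∈ ncone C x) : t • f ∈ ncone C x := by
  intro c hc
  simpa using mul_nonpos_of_nonneg_of_nonpos ht (hf c hc)

private lemma ncone_anti {C D : Set X} (h : C ⊆ D) (x : X) : ncone D x ⊆ ncone C x :=
  fun _ hf c hc => hf c (h hc)

private lemma mem_wcl {S : Set (X →L[ℝ] ℝ)} {f : X →L[ℝ] ℝ} :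
    f ∈ wcl S ↔ StrongDual.toWeakDual (𝕜 := ℝ) (E := X) f ∈
      closure (StrongDual.toWeakDual (𝕜 := ℝ) (E := X) '' S) := Iff.rfl

private lemma subset_wcl (S : Set (X →L[ℝ] ℝ)) : S ⊆ wcl S := by
  intro f hf
  rw [mem_wcl]
  exact subset_closure ⟨f, hf, rfl⟩

private lemma wcl_mono {S T : Set (X →L[ℝ] ℝ)} (h : S ⊆ T) : wcl S ⊆ wcl T := by
  intro f hf
  rw [mem_wcl] at hf ⊢
  exact closure_mono (Set.image_mono h) hf

private lemma wcl_smul {S : Set (X →L[ℝ] ℝ)} {f : X →L[ℝ] ℝ} (c : ℝ) (hf : f ∈ wcl S) :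
    c • f ∈ wcl ((c • ·) '' S) := by
  have hcont : Continuous fun φ : WeakDual ℝ X => c • φ := continuous_const_smul c
  rw [mem_wcl] at hf ⊢
  refine map_mem_closure (f := fun φ : WeakDual ℝ X => c • φ) hcont hf ?_
  rintro _ ⟨g, hg, rfl⟩
  exact ⟨c • g, ⟨g, hg, rfl⟩, rfl⟩

private lemma wcl_subset_ncone {C : Set X} {x : X} {S : Set (X →L[ℝ] ℝ)}
    (h : S ⊆ ncone C x) : wcl S ⊆ ncone C x := by
  intro f hf c hc
  rw [mem_wcl] at hf
  have hcont : Continuous fun φ : WeakDual ℝ X => φ (c - x) :=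
    WeakDual.eval_continuous (c - x)
  have hcl := IsClosed.preimage hcont (isClosed_Iic (a := (0 : ℝ)))
  refine hcl.closure_subset_iff.2 ?_ hf
  rintro _ ⟨g, hg, rfl⟩
  exact h hg c hc

/-- The set of bounded finite sums. -/
def bSums {I : Type*} (N : I → Set (X →L[ℝ] ℝ)) (β : ℝ) : Set (X →L[ℝ] ℝ) :=
  {g | ∃ (s : Finset I) (x : I → (X →L[ℝ] ℝ)),
    (∀ i ∈ s, x i ∈ N i) ∧ g = ∑ i ∈ s, x i ∧ ∑ i ∈ s, ‖x i‖ ≤ β}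

private lemma bSums_convex {I : Type*} (N : I → Set (X →L[ℝ] ℝ))
    (h0 : ∀ i, (0 : X →L[ℝ] ℝ) ∈ N i)
    (hadd : ∀ i, ∀ f ∈ N i, ∀ g ∈ N i, f + g ∈ N i)
    (hsmul : ∀ i, ∀ t : ℝ, 0 ≤ t → ∀ f ∈ N i, t • f ∈ N i) (β : ℝ) :
    Convex ℝ (bSums N β) := by
  classical
  rintro g ⟨s, xs, hxs, rfl, hbs⟩ h ⟨t, yt, hyt, rfl, hbt⟩ a b ha hb hab
  refine ⟨s ∪ t, fun i => a • (if i ∈ s then xs i else 0) + b • (if i ∈ t then yt i else 0),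
    ?_, ?_, ?_⟩
  · intro i _
    refine hadd i _ (hsmul i a ha _ ?_) _ (hsmul i b hb _ ?_)
    · split_ifs with h'
      · exact hxs i h'
      · exact h0 i
    · split_ifs with h'
      · exact hyt i h'
      · exact h0 i
  · rw [Finset.sum_add_distrib, ← Finset.smul_sum, ← Finset.smul_sum,
      Finset.sum_ite_mem, Finset.sum_ite_mem, Finset.union_inter_cancel_left,
      Finset.union_inter_cancel_right]
  · calc ∑ i ∈ s ∪ t, ‖a • (if i ∈ s then xs i else 0) + b • (if i ∈ t then yt i else 0)‖
        ≤ ∑ i ∈ s ∪ t, (a * ‖(if i ∈ s then xs i else 0)‖ + b * ‖(if i ∈ t then yt i else 0)‖) := by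
          refine Finset.sum_le_sum fun i _ => ?_
          calc ‖a • (if i ∈ s then xs i else 0) + b • (if i ∈ t then yt i else 0)‖
              ≤ ‖a • (if i ∈ s then xs i else 0)‖ + ‖b • (if i ∈ t then yt i else 0)‖ :=
                norm_add_le _ _
            _ = a * ‖(if i ∈ s then xs i else 0)‖ + b * ‖(if i ∈ t then yt i else 0)‖ := by
                split_ifs <;> simp [norm_smul' a ha, norm_smul' b hb]
      _ = a * (∑ i ∈ s ∪ t, ‖(if i ∈ s then xs i else 0)‖)
          + b * (∑ i ∈ s ∪ t, ‖(if i ∈ t then yt i else 0)‖) := by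
          rw [Finset.sum_add_distrib, Finset.mul_sum, Finset.mul_sum]
      _ = a * (∑ i ∈ s, ‖xs i‖) + b * (∑ i ∈ t, ‖yt i‖) := by
          have hs1 : ∑ i ∈ s ∪ t, ‖(if i ∈ s then xs i else 0 : X →L[ℝ] ℝ)‖
              = ∑ i ∈ s, ‖xs i‖ := by
            rw [Finset.sum_congr rfl (fun i _ => by rw [apply_ite norm, norm_zero]),
              Finset.sum_ite_mem, Finset.union_inter_cancel_left]
          have hs2 : ∑ i ∈ s ∪ t, ‖(if i ∈ t then yt i else 0 : X →L[ℝ] ℝ)‖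
              = ∑ i ∈ t, ‖yt i‖ := by
            rw [Finset.sum_congr rfl (fun i _ => by rw [apply_ite norm, norm_zero]),
              Finset.sum_ite_mem, Finset.union_inter_cancel_right]
          rw [hs1, hs2]
      _ ≤ a * β + b * β := by gcongr
      _ = β := by rw [← add_mul, hab, one_mul]

private lemma smul_sum_mem {ι : Type*} {C : Set (X →L[ℝ] ℝ)} (hC : Convex ℝ C)
    (h0 : (0 : X →L[ℝ] ℝ) ∈ C) (s : Finset ι) (μ : ι → ℝ) (c : ι → (X →L[ℝ] ℝ))
    (hμ : ∀ i ∈ s, 0 ≤ μ i) (hc : ∀ i ∈ s, c i ∈ C) (hsum : ∑ i ∈ s, μ i ≤ 1) :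
    ∑ i ∈ s, μ i • c i ∈ C := by
  set T := ∑ i ∈ s, μ i with hT
  rcases eq_or_lt_of_le (Finset.sum_nonneg hμ : (0:ℝ) ≤ T) with hT0 | hT0
  · have : ∀ i ∈ s, μ i = 0 := by
      intro i hi
      exact (Finset.sum_eq_zero_iff_of_nonneg hμ).1 hT0.symm i hi
    rw [Finset.sum_congr rfl fun i hi => by rw [this i hi, zero_smul]]
    simpa using h0
  · have hd : ∑ i ∈ s, (μ i / T) • c i ∈ C := by
      refine hC.sum_mem (fun i hi => div_nonneg (hμ i hi) hT0.le) ?_ hc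
      rw [← Finset.sum_div, ← hT, div_self hT0.ne']
    have heq : ∑ i ∈ s, μ i • c i = T • ∑ i ∈ s, (μ i / T) • c i := by
      rw [Finset.smul_sum]
      refine Finset.sum_congr rfl fun i hi => ?_
      rw [smul_smul, mul_div_cancel₀ _ hT0.ne']
    rw [heq]
    have := hC hd h0 hT0.le (by linarith : (0:ℝ) ≤ 1 - T) (by ring)
    simpa using this

variable {I : Type*} [Nonempty I]

/-- The convex hull of the union of `N i ∩ γ B` is contained in the `γ`-bounded sums. -/
private lemma hull_subset_bSums {γ : ℝ} (hγ : 0 < γ) (N : I → Set (X →L[ℝ] ℝ))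
    (h0 : ∀ i, (0 : X →L[ℝ] ℝ) ∈ N i)
    (hadd : ∀ i, ∀ f ∈ N i, ∀ g ∈ N i, f + g ∈ N i)
    (hsmul : ∀ i, ∀ t : ℝ, 0 ≤ t → ∀ f ∈ N i, t • f ∈ N i) :
    convexHull ℝ (⋃ i, N i ∩ γ • closedBall (0 : X →L[ℝ] ℝ) 1) ⊆ bSums N γ := by
  refine convexHull_min ?_ (bSums_convex N h0 hadd hsmul γ)
  rintro g hg
  rw [Set.mem_iUnion] at hg
  obtain ⟨i, hgN, hgB⟩ := hg
  obtain ⟨h, hh, rfl⟩ := hgB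
  rw [mem_closedBall_zero_iff] at hh
  refine ⟨{i}, fun _ => γ • h, fun j hj => ?_, by simp, ?_⟩
  · rw [Finset.mem_singleton] at hj
    subst hj; exact hgN
  · rw [Finset.sum_singleton, norm_smul' γ hγ.le]
    calc γ * ‖h‖ ≤ γ * 1 := by gcongr
      _ = γ := mul_one γ

/-- The `γ`-bounded sums are contained in the convex hull of the union of `N i ∩ γ B`. -/
private lemma bSums_subset_hull {γ : ℝ} (hγ : 0 < γ) (N : I → Set (X →L[ℝ] ℝ))
    (h0 : ∀ i, (0 : X →L[ℝ] ℝ) ∈ N i)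
    (hsmul : ∀ i, ∀ t : ℝ, 0 ≤ t → ∀ f ∈ N i, t • f ∈ N i) :
    bSums N γ ⊆ convexHull ℝ (⋃ i, N i ∩ γ • closedBall (0 : X →L[ℝ] ℝ) 1) := by
  classical
  rintro g ⟨s, x, hx, rfl, hb⟩
  set U := ⋃ i, N i ∩ γ • closedBall (0 : X →L[ℝ] ℝ) 1 with hU
  have h0U : (0 : X →L[ℝ] ℝ) ∈ U := by
    obtain ⟨i₀⟩ := ‹Nonempty I›
    refine Set.mem_iUnion.2 ⟨i₀, h0 i₀, ?_⟩
    refine ⟨0, ?_, smul_zero γ⟩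
    simp
  set c : I → (X →L[ℝ] ℝ) := fun i => if x i = 0 then 0 else (γ / ‖x i‖) • x i with hc
  have hxc : ∀ i ∈ s, x i = (‖x i‖ / γ) • c i := by
    intro i _
    by_cases hxi : x i = 0
    · simp [hc, hxi]
    · rw [hc]
      simp only [hxi, if_false]
      rw [smul_smul, div_mul_div_comm, mul_comm ‖x i‖ γ,
        div_self (mul_ne_zero hγ.ne' (norm_ne_zero_iff.2 hxi)), one_smul]
  have hcU : ∀ i ∈ s, c i ∈ convexHull ℝ U := by
    intro i _
    refine subset_convexHull ℝ U ?_
    by_cases hxi : x i = 0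
    · simp only [hc, hxi, if_true]
      exact h0U
    · simp only [hc, hxi, if_false]
      refine Set.mem_iUnion.2
        ⟨i, hsmul i _ (div_nonneg hγ.le (norm_nonneg _)) _ (hx i ‹i ∈ s›), ?_⟩
      refine ⟨(1 / ‖x i‖) • x i, ?_, ?_⟩
      · rw [mem_closedBall_zero_iff, norm_smul' _ (by positivity),
          one_div, inv_mul_cancel₀ (norm_ne_zero_iff.2 hxi)]
      · show γ • ((1 / ‖x i‖) • x i) = (γ / ‖x i‖) • x i
        rw [smul_smul, mul_one_div]
  have hμsum : ∑ i ∈ s, ‖x i‖ / γ ≤ 1 := by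
    rw [← Finset.sum_div]
    exact (div_le_one hγ).2 hb
  have := smul_sum_mem (convex_convexHull ℝ U) (subset_convexHull ℝ U h0U) s
    (fun i => ‖x i‖ / γ) c (fun i _ => by positivity) hcU hμsum
  rw [Finset.sum_congr rfl hxc]
  exact this

private lemma finSums_subset_ncone (A : I → Set X) (x : X) :
    finSums (fun i => ncone (A i) x) ⊆ ncone (⋂ i, A i) x := by
  rintro g ⟨s, y, hy, rfl⟩
  exact Finset.sum_induction y (· ∈ ncone (⋂ i, A i) x) (fun a b ha hb => ncone_add ha hb)
    (zero_mem_ncone _ _) (fun i hi => ncone_anti (Set.iInter_subset A i) x (hy i hi))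

private lemma smul_bSums_subset {N : I → Set (X →L[ℝ] ℝ)}
    (hsmul : ∀ i, ∀ t : ℝ, 0 ≤ t → ∀ f ∈ N i, t • f ∈ N i)
    {c : ℝ} (hc : 0 ≤ c) (β : ℝ) :
    (c • ·) '' bSums N β ⊆ bSums N (c * β) := by
  rintro _ ⟨g, ⟨s, x, hx, rfl, hb⟩, rfl⟩
  refine ⟨s, fun i => c • x i, fun i hi => hsmul i c hc _ (hx i hi),
    Finset.smul_sum, ?_⟩
  calc ∑ i ∈ s, ‖c • x i‖ = ∑ i ∈ s, c * ‖x i‖ :=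
        Finset.sum_congr rfl fun i _ => norm_smul' c hc _
    _ = c * ∑ i ∈ s, ‖x i‖ := by rw [Finset.mul_sum]
    _ ≤ c * β := by gcongr

private lemma bSums_subset_finSums (N : I → Set (X →L[ℝ] ℝ)) (β : ℝ) :
    bSums N β ⊆ finSums N := by
  rintro g ⟨s, x, hx, hg, _⟩
  exact ⟨s, x, hx, hg⟩

private lemma bSums_mono (N : I → Set (X →L[ℝ] ℝ)) {β β' : ℝ} (h : β ≤ β') :
    bSums N β ⊆ bSums N β' := by
  rintro g ⟨s, x, hx, hg, hb⟩
  exact ⟨s, x, hx, hg, hb.trans h⟩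

end Aux

set_option maxHeartbeats 1000000 in
theorem stmt19 {X : Type*} [NormedAddCommGroup X] [NormedSpace ℝ X] [CompleteSpace X]
    {I : Type*} [Nonempty I] (γ : ℝ) (hγ : 0 < γ) (A : I → Set X)
    (hcl : ∀ i, IsClosed (A i)) (hconv : ∀ i, Convex ℝ (A i))
    (hne : (⋂ i, A i).Nonempty) :
    (∀ x ∈ ⋂ i, A i,
        ncone (⋂ i, A i) x ∩ closedBall (0 : X →L[ℝ] ℝ) 1 ⊆
          wcl (convexHull ℝ
            (⋃ i, ncone (A i) x ∩ γ • closedBall (0 : X →L[ℝ] ℝ) 1))) ↔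
      ((∀ x ∈ ⋂ i, A i,
          ncone (⋂ i, A i) x = wcl (finSums (fun i => ncone (A i) x))) ∧
        ∀ x ∈ ⋂ i, A i, propG (fun i => ncone (A i) x) (1 / γ)) := by
  classical
  have hγ' : (1 : ℝ) / (1 / γ) = γ := one_div_one_div γ
  constructor
  · intro H
    -- common facts for a fixed x
    have key : ∀ x ∈ ⋂ i, A i, ∀ f ∈ ncone (⋂ i, A i) x, f ≠ 0 →
        f ∈ wcl (bSums (fun i => ncone (A i) x) (‖f‖ * γ)) := by
      intro x hx f hf hf0
      set N : I → Set (X →L[ℝ] ℝ) := fun i => ncone (A i) x with hN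
      have hnorm : (0:ℝ) < ‖f‖ := norm_pos_iff.2 hf0
      set g : X →L[ℝ] ℝ := ‖f‖⁻¹ • f with hg
      have hgN : g ∈ ncone (⋂ i, A i) x := ncone_smul (inv_nonneg.2 hnorm.le) hf
      have hgB : g ∈ closedBall (0 : X →L[ℝ] ℝ) 1 := by
        rw [mem_closedBall_zero_iff, hg, norm_smul' _ (inv_nonneg.2 hnorm.le),
          inv_mul_cancel₀ hnorm.ne']
      have hg1 : g ∈ wcl (bSums N γ) :=
        wcl_mono (hull_subset_bSums hγ N (fun i => zero_mem_ncone _ _)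
          (fun i f hf g hg => ncone_add hf hg)
          (fun i t ht f hf => ncone_smul ht hf)) (H x hx ⟨hgN, hgB⟩)
      have hfg : f = ‖f‖ • g := by
        rw [hg, smul_smul, mul_inv_cancel₀ hnorm.ne', one_smul]
      have h2 : ‖f‖ • g ∈ wcl (bSums N (‖f‖ * γ)) :=
        wcl_mono (smul_bSums_subset (fun i t ht f hf => ncone_smul ht hf) hnorm.le γ)
          (wcl_smul ‖f‖ hg1)
      rwa [← hfg] at h2
    have chip : ∀ x ∈ ⋂ i, A i,
        ncone (⋂ i, A i) x = wcl (finSums (fun i => ncone (A i) x)) := by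
      intro x hx
      refine Set.Subset.antisymm ?_ (wcl_subset_ncone (finSums_subset_ncone A x))
      intro f hf
      by_cases hf0 : f = 0
      · subst hf0
        exact subset_wcl _ ⟨∅, fun _ => 0, by simp, by simp⟩
      · exact wcl_mono (bSums_subset_finSums _ _) (key x hx f hf hf0)
    refine ⟨chip, ?_⟩
    intro x hx f hf
    rw [hγ']
    by_cases hf0 : f = 0
    · refine subset_wcl _ ⟨∅, fun _ => 0, by simp, by simp [hf0], ?_⟩
      simp [hf0]
    · have hfN : f ∈ ncone (⋂ i, A i) x := by
        rw [chip x hx]; exact hf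
      have := key x hx f hfN hf0
      exact wcl_mono (bSums_mono _ (le_of_eq (mul_comm _ _))) this
  · rintro ⟨hchip, hprop⟩ x hx f ⟨hfN, hfB⟩
    have hf1 : f ∈ wcl (finSums (fun i => ncone (A i) x)) := by
      rw [← hchip x hx]; exact hfN
    have hf2 := hprop x hx f hf1
    rw [hγ'] at hf2
    have hsub : bSums (fun i => ncone (A i) x) (γ * ‖f‖) ⊆
        convexHull ℝ (⋃ i, ncone (A i) x ∩ γ • closedBall (0 : X →L[ℝ] ℝ) 1) := by
      refine (bSums_mono _ ?_).trans (bSums_subset_hull hγ _ (fun i => zero_mem_ncone _ _)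
        (fun i t ht f hf => ncone_smul ht hf))
      have : ‖f‖ ≤ 1 := mem_closedBall_zero_iff.1 hfB
      calc γ * ‖f‖ ≤ γ * 1 := by gcongr
        _ = γ := mul_one γ
    exact wcl_mono hsub hf2
end
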